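/- Let G be a finite directed graph with nonnegative capacities c, and φ : V → ℝ a potential with |φ(v)| < M for all v. Then Σ_{(u,v) ∈ E} c(u,v)·max(0, φ(u) − φ(v)) = ∫_{-M}^{M} c(∂⁺V_{>x}) dx, where V_{>x} = {v : φ(v) > x} and c(∂⁺S) is the capacity of the directed cut out of S. -/

import Mathlib

open MeasureTheory

lemma aux_indicator_integral (a b C M : ℝ) (ha : -M < a) (hb : b < M) :
    (∫ x in (-M)..M, (Set.Ico a b).indicator (fun _ => C) x) = C * max 0 (b - a) := by
  rcases le_or_gt b a with h | h
  · rw [Set.Ico_eq_empty (not_lt.mpr h)]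
    simp [max_eq_left (by linarith : b - a ≤ 0)]
  · rw [intervalIntegral.integral_of_le (by linarith : -M ≤ M),
      setIntegral_indicator measurableSet_Ico]
    have hsub : Set.Ioc (-M) M ∩ Set.Ico a b = Set.Ico a b := by
      refine Set.inter_eq_right.mpr fun x hx => ?_
      exact ⟨lt_of_lt_of_le ha hx.1, le_of_lt (lt_of_lt_of_le hx.2 hb.le)⟩
    rw [hsub, setIntegral_const, Real.volume_real_Ico, smul_eq_mul,
      max_eq_left (by linarith : (0:ℝ) ≤ b - a),
      max_eq_right (by linarith : (0:ℝ) ≤ b - a), mul_comm]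

theorem stmt_2 {V : Type*} [Fintype V] (c : V → V → ℝ) (hc : ∀ u v, 0 ≤ c u v)
    (φ : V → ℝ) (M : ℝ) (hM : ∀ v, |φ v| < M) :
    ∑ u, ∑ v, c u v * max 0 (φ u - φ v) =
      ∫ x in (-M)..M,
        ∑ u ∈ Finset.univ.filter (fun u => x < φ u),
          ∑ v ∈ Finset.univ.filter (fun v => ¬ x < φ v), c u v := by
  have hrw : ∀ x : ℝ,
      (∑ u ∈ Finset.univ.filter (fun u => x < φ u),
        ∑ v ∈ Finset.univ.filter (fun v => ¬ x < φ v), c u v)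
      = ∑ u, ∑ v, (Set.Ico (φ v) (φ u)).indicator (fun _ => c u v) x := by
    intro x
    rw [Finset.sum_filter]
    refine Finset.sum_congr rfl fun u _ => ?_
    rw [Finset.sum_filter]
    by_cases hu : x < φ u
    · simp only [hu, if_true]
      refine Finset.sum_congr rfl fun v _ => ?_
      by_cases hv : x < φ v
      · simp [hv, Set.indicator_apply, Set.mem_Ico, not_le.mpr hv]
      · simp [hv, Set.indicator_apply, Set.mem_Ico, not_lt.mp hv, hu]
    · simp only [hu, if_false]
      symm
      refine Finset.sum_eq_zero fun v _ => ?_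
      simp [Set.indicator_apply, Set.mem_Ico, hu]
  rw [intervalIntegral.integral_congr (fun x _ => hrw x)]
  have hint : ∀ (u v : V), IntervalIntegrable
      ((Set.Ico (φ v) (φ u)).indicator (fun _ => c u v)) volume (-M) M := by
    intro u v
    exact ((integrable_indicator_iff measurableSet_Ico).2
      (integrableOn_const measure_Ico_lt_top.ne)).intervalIntegrable
  have hsum : ∀ u : V, IntervalIntegrable
      (fun x => ∑ v : V, (Set.Ico (φ v) (φ u)).indicator (fun _ => c u v) x)
      volume (-M) M := by
    intro u
    have heq : (∑ v : V, (Set.Ico (φ v) (φ u)).indicator (fun _ => c u v))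
        = fun x => ∑ v : V, (Set.Ico (φ v) (φ u)).indicator (fun _ => c u v) x := by
      ext x; simp
    rw [← heq]
    exact IntervalIntegrable.sum _ (fun v _ => hint u v)
  have h2 : (∫ x in (-M)..M, ∑ u : V, ∑ v : V,
        (Set.Ico (φ v) (φ u)).indicator (fun _ => c u v) x)
      = ∑ u : V, ∫ x in (-M)..M, ∑ v : V,
        (Set.Ico (φ v) (φ u)).indicator (fun _ => c u v) x :=
    intervalIntegral.integral_finset_sum (fun u _ => hsum u)
  rw [h2]
  refine Finset.sum_congr rfl fun u _ => ?_
  rw [intervalIntegral.integral_finset_sum (fun v _ => hint u v)]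
  refine Finset.sum_congr rfl fun v _ => ?_
  rw [aux_indicator_integral (φ v) (φ u) (c u v) M
    (neg_lt_of_abs_lt (hM v)) (lt_of_abs_lt (hM u))]
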